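/- For t ≥ 1 set d_t = ⌊3(t−1)/5⌋, and for r ≥ 9 define the polynomial f(x_1, ..., x_r) = (1 + x_1 + x_2) ∏_{t=3}^{r} (1 + x_t) − ∑_{t=1}^{r} x_t + x_1 x_2 − ∑_{t=3}^{r} ∑_{i=1}^{d_t} x_i x_t + x_1 x_2 ∑_{t=3}^{8} x_t − x_1 x_3 ∑_{t=9}^{r} x_t + x_1 x_2 ∑_{t=6}^{r} ∑_{i=3}^{d_t} x_i x_t (where empty sums are 0). Then f is monotone on nonnegative arguments: if 0 ≤ x_t ≤ y_t for all t ∈ {1, ..., r}, then f(x_1, ..., x_r) ≤ f(y_1, ..., y_r). -/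
import Mathlib

open Finset

/-- `d t = ⌊3(t−1)/5⌋`. -/
def guoSunD (t : ℕ) : ℕ := 3 * (t - 1) / 5

/-- The Guo–Sun polynomial
`f(x_1, …, x_r) = (1 + x_1 + x_2) ∏_{t=3}^{r} (1 + x_t) − ∑_{t=1}^{r} x_t + x_1 x_2`
`− ∑_{t=3}^{r} ∑_{i=1}^{d_t} x_i x_t + x_1 x_2 ∑_{t=3}^{8} x_t − x_1 x_3 ∑_{t=9}^{r} x_t`
`+ x_1 x_2 ∑_{t=6}^{r} ∑_{i=3}^{d_t} x_i x_t`. -/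
def guoSunF (r : ℕ) (x : ℕ → ℝ) : ℝ :=
  (1 + x 1 + x 2) * ∏ t ∈ Finset.Icc 3 r, (1 + x t)
    - ∑ t ∈ Finset.Icc 1 r, x t
    + x 1 * x 2
    - ∑ t ∈ Finset.Icc 3 r, ∑ i ∈ Finset.Icc 1 (guoSunD t), x i * x t
    + x 1 * x 2 * ∑ t ∈ Finset.Icc 3 8, x t
    - x 1 * x 3 * ∑ t ∈ Finset.Icc 9 r, x t
    + x 1 * x 2 * ∑ t ∈ Finset.Icc 6 r, ∑ i ∈ Finset.Icc 3 (guoSunD t), x i * x t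

/-! ### Auxiliary definitions -/

private def gsP (r : ℕ) (x : ℕ → ℝ) : ℝ := ∏ t ∈ Icc 3 r, (1 + x t)
private def gsS (r : ℕ) (x : ℕ → ℝ) : ℝ := ∑ t ∈ Icc 3 r, x t
private def gsT (r : ℕ) (x : ℕ → ℝ) : ℝ := ∑ t ∈ Icc 3 r, x t * ∑ i ∈ Icc 3 (t - 1), x i
private def gsE (r : ℕ) (x : ℕ → ℝ) : ℝ :=
  ∑ t ∈ Icc 6 r, ∑ i ∈ Icc 3 (guoSunD t), x i * x t

/-- Peel off the bottom element of a sum over `Icc`. -/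
private lemma sum_Icc_bot (f : ℕ → ℝ) {a b c : ℕ} (h : a ≤ b) (hc : c = a + 1) :
    ∑ i ∈ Icc a b, f i = f a + ∑ i ∈ Icc c b, f i := by
  subst hc
  rw [Finset.Icc_add_one_left_eq_Ioc, ← Finset.Ioc_insert_left h, Finset.sum_insert (by simp)]

/-- The key induction: `P`, `S`, `Q := P − 1 − S` and `R := Q − T` are nonnegative
and monotone. -/
private lemma gs_main (r : ℕ) (x y : ℕ → ℝ)
    (h : ∀ t ∈ Icc 3 r, 0 ≤ x t ∧ x t ≤ y t) :
    (1 ≤ gsP r x ∧ gsP r x ≤ gsP r y) ∧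
    (0 ≤ gsS r x ∧ gsS r x ≤ gsS r y) ∧
    (0 ≤ gsP r x - 1 - gsS r x ∧ gsP r x - 1 - gsS r x ≤ gsP r y - 1 - gsS r y) ∧
    (0 ≤ gsP r x - 1 - gsS r x - gsT r x ∧
      gsP r x - 1 - gsS r x - gsT r x ≤ gsP r y - 1 - gsS r y - gsT r y) := by
  induction r with
  | zero =>
      have he : Icc 3 0 = (∅ : Finset ℕ) := Icc_eq_empty (by omega)
      simp [gsP, gsS, gsT, he]
  | succ n ih =>
      by_cases hn : 3 ≤ n + 1
      · have hsub : ∀ t ∈ Icc 3 n, t ∈ Icc 3 (n + 1) := by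
          intro t ht; simp [mem_Icc] at ht ⊢; omega
        obtain ⟨⟨hP1, hPm⟩, ⟨hS0, hSm⟩, ⟨hQ0, hQm⟩, ⟨hR0, hRm⟩⟩ :=
          ih (fun t ht => h t (hsub t ht))
        obtain ⟨ha0, ham⟩ := h (n + 1) (by simp [mem_Icc]; omega)
        have hP1y : 1 ≤ gsP n y := le_trans hP1 hPm
        have hSy0 : 0 ≤ gsS n y := le_trans hS0 hSm
        have hay0 : 0 ≤ y (n + 1) := le_trans ha0 ham
        have hP : ∀ z : ℕ → ℝ, gsP (n + 1) z = gsP n z * (1 + z (n + 1)) := fun z =>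
          Finset.prod_Icc_succ_top hn _
        have hS : ∀ z : ℕ → ℝ, gsS (n + 1) z = gsS n z + z (n + 1) := fun z =>
          Finset.sum_Icc_succ_top hn _
        have hT : ∀ z : ℕ → ℝ, gsT (n + 1) z = gsT n z + z (n + 1) * gsS n z := by
          intro z
          have := Finset.sum_Icc_succ_top hn (fun t => z t * ∑ i ∈ Icc 3 (t - 1), z i)
          simpa [gsT, gsS] using this
        rw [hP, hP, hS, hS, hT, hT]
        have key1 : gsP n x * (1 + x (n + 1)) ≤ gsP n y * (1 + y (n + 1)) := by
          apply mul_le_mul hPm (by linarith) (by linarith) (by linarith)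
        have key2 : x (n + 1) * (gsP n x - 1) ≤ y (n + 1) * (gsP n y - 1) := by
          apply mul_le_mul ham (by linarith) (by linarith) hay0
        have key3 : x (n + 1) * (gsP n x - 1 - gsS n x) ≤
            y (n + 1) * (gsP n y - 1 - gsS n y) := by
          apply mul_le_mul ham (by linarith) (by linarith) hay0
        refine ⟨⟨by nlinarith, key1⟩, ⟨by linarith, by linarith⟩, ⟨by nlinarith, ?_⟩,
          ⟨by nlinarith, ?_⟩⟩
        · nlinarith [key2]
        · nlinarith [key3]
      · have he : Icc 3 (n + 1) = (∅ : Finset ℕ) := Icc_eq_empty (by omega)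
        simp [gsP, gsS, gsT, he]

/-- Rewriting `gsE` as a sum over `Icc 3 r`. -/
private lemma gsE_eq (r : ℕ) (hr : 6 ≤ r) (x : ℕ → ℝ) :
    gsE r x = ∑ t ∈ Icc 3 r, x t * ∑ i ∈ Icc 3 (guoSunD t), x i := by
  have hIcc : Icc 3 r = Icc 3 5 ∪ Icc 6 r := by
    ext a; simp [mem_Icc, mem_union]; omega
  have hdisj : Disjoint (Icc 3 5) (Icc 6 r) := by
    simp [Finset.disjoint_left, mem_Icc]; omega
  rw [hIcc, Finset.sum_union hdisj]
  have hz : ∑ t ∈ Icc 3 5, x t * ∑ i ∈ Icc 3 (guoSunD t), x i = 0 := by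
    apply Finset.sum_eq_zero
    intro t ht
    simp [mem_Icc] at ht
    have : guoSunD t < 3 := by unfold guoSunD; omega
    rw [Icc_eq_empty (by omega)]
    simp
  rw [hz, zero_add]
  unfold gsE
  apply Finset.sum_congr rfl
  intro t _
  rw [Finset.mul_sum]
  apply Finset.sum_congr rfl
  intros; ring

/-- Decomposition of the inner sum of `A`. -/
private lemma gsA_eq (r : ℕ) (hr : 9 ≤ r) (x : ℕ → ℝ) :
    ∑ t ∈ Icc 3 r, ∑ i ∈ Icc 1 (guoSunD t), x i * x t
      = x 1 * gsS r x + x 2 * (gsS r x - x 3 - x 4) + gsE r x := by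
  have hinner : ∀ t ∈ Icc 3 r, (∑ i ∈ Icc 1 (guoSunD t), x i * x t)
      = x 1 * x t + ((if 5 ≤ t then x 2 * x t else 0)
        + x t * ∑ i ∈ Icc 3 (guoSunD t), x i) := by
    intro t ht
    simp only [mem_Icc] at ht
    have hd1 : 1 ≤ guoSunD t := by unfold guoSunD; omega
    rw [sum_Icc_bot _ hd1 rfl]
    by_cases h5 : 5 ≤ t
    · have hd2 : 2 ≤ guoSunD t := by unfold guoSunD; omega
      rw [sum_Icc_bot (fun i => x i * x t) (a := 1 + 1) (c := 3) (by omega) (by norm_num),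
        if_pos h5, Finset.mul_sum]
      congr 1
      congr 1
      apply Finset.sum_congr rfl
      intros; ring
    · have hd2 : guoSunD t < 2 := by unfold guoSunD; omega
      rw [Icc_eq_empty (a := 1 + 1) (by omega), Icc_eq_empty (a := 3) (by omega),
        if_neg h5]
      simp
  rw [Finset.sum_congr rfl hinner, Finset.sum_add_distrib, Finset.sum_add_distrib,
    ← Finset.mul_sum, ← Finset.sum_filter]
  have hfilt : (Icc 3 r).filter (fun t => 5 ≤ t) = Icc 5 r := by
    ext a; simp [mem_Icc, mem_filter]; omega
  rw [hfilt, ← Finset.mul_sum]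
  have hS5 : ∑ t ∈ Icc 5 r, x t = gsS r x - x 3 - x 4 := by
    unfold gsS
    rw [sum_Icc_bot x (by omega : 3 ≤ r) (by norm_num : 4 = 3 + 1),
      sum_Icc_bot x (by omega : 4 ≤ r) (by norm_num : 5 = 4 + 1)]
    ring
  rw [hS5, gsE_eq r (by omega) x]
  unfold gsS
  ring

/-- The structural decomposition of `guoSunF`. -/
private lemma gsF_eq (r : ℕ) (hr : 9 ≤ r) (x : ℕ → ℝ) :
    guoSunF r x =
      1 + x 1 * x 2 + x 2 * x 3 + x 2 * x 4 + x 1 * x 2 * (∑ t ∈ Icc 3 8, x t)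
        + (1 + x 1) * (gsP r x - 1 - gsS r x - gsT r x)
        + (gsT r x - gsE r x)
        + x 1 * (gsT r x - x 3 * ∑ t ∈ Icc 9 r, x t)
        + x 2 * (gsP r x - 1 - gsS r x)
        + x 1 * x 2 * gsE r x := by
  unfold guoSunF
  have h1 : ∑ t ∈ Icc 1 r, x t = x 1 + (x 2 + gsS r x) := by
    unfold gsS
    rw [sum_Icc_bot x (by omega : 1 ≤ r) (by norm_num : 2 = 1 + 1),
      sum_Icc_bot x (by omega : 2 ≤ r) (by norm_num : 3 = 2 + 1)]
  rw [h1, gsA_eq r hr x]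
  show (1 + x 1 + x 2) * gsP r x - _ + _ - _ + _ - _ + x 1 * x 2 * gsE r x = _
  ring

/-- `T − E` as a manifestly monotone sum. -/
private lemma gsTE_eq (r : ℕ) (hr : 9 ≤ r) (x : ℕ → ℝ) :
    gsT r x - gsE r x
      = ∑ t ∈ Icc 3 r, x t * ∑ i ∈ Icc 3 (t - 1) \ Icc 3 (guoSunD t), x i := by
  rw [gsE_eq r (by omega) x]
  unfold gsT
  rw [← Finset.sum_sub_distrib]
  apply Finset.sum_congr rfl
  intro t ht
  simp only [mem_Icc] at ht
  have hsub : Icc 3 (guoSunD t) ⊆ Icc 3 (t - 1) :=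
    Finset.Icc_subset_Icc_right (by unfold guoSunD; omega)
  rw [Finset.sum_sdiff_eq_sub hsub]
  ring

/-- `T − x₃·C` as a manifestly monotone sum. -/
private lemma gsTC_eq (r : ℕ) (hr : 9 ≤ r) (x : ℕ → ℝ) :
    gsT r x - x 3 * ∑ t ∈ Icc 9 r, x t
      = (∑ t ∈ Icc 3 8, x t * ∑ i ∈ Icc 3 (t - 1), x i)
        + ∑ t ∈ Icc 9 r, x t * ∑ i ∈ Icc 4 (t - 1), x i := by
  have hIcc : Icc 3 r = Icc 3 8 ∪ Icc 9 r := by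
    ext a; simp [mem_Icc, mem_union]; omega
  have hdisj : Disjoint (Icc 3 8) (Icc 9 r) := by
    simp [Finset.disjoint_left, mem_Icc]; omega
  have h2 : ∑ t ∈ Icc 9 r, x t * ∑ i ∈ Icc 3 (t - 1), x i
      = x 3 * (∑ t ∈ Icc 9 r, x t) + ∑ t ∈ Icc 9 r, x t * ∑ i ∈ Icc 4 (t - 1), x i := by
    rw [Finset.mul_sum, ← Finset.sum_add_distrib]
    apply Finset.sum_congr rfl
    intro t ht
    simp only [mem_Icc] at ht
    rw [sum_Icc_bot x (by omega : 3 ≤ t - 1) (by norm_num : 4 = 3 + 1)]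
    ring
  unfold gsT
  rw [hIcc, Finset.sum_union hdisj, h2]
  ring

theorem guoSunF_monotone
    (r : ℕ) (hr : 9 ≤ r) (x y : ℕ → ℝ)
    (hxy : ∀ t ∈ Finset.Icc 1 r, 0 ≤ x t ∧ x t ≤ y t) :
    guoSunF r x ≤ guoSunF r y := by
  have key : ∀ i, 1 ≤ i → i ≤ r → 0 ≤ x i ∧ x i ≤ y i ∧ 0 ≤ y i := by
    intro i h1 h2
    obtain ⟨hx0, hxy'⟩ := hxy i (by simp [mem_Icc]; omega)
    exact ⟨hx0, hxy', le_trans hx0 hxy'⟩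
  obtain ⟨⟨hP1, hPm⟩, ⟨hS0, hSm⟩, ⟨hQ0, hQm⟩, ⟨hR0, hRm⟩⟩ :=
    gs_main r x y (fun t ht => by
      simp only [mem_Icc] at ht
      exact ⟨(key t (by omega) ht.2).1, (key t (by omega) ht.2).2.1⟩)
  -- B = ∑_{t=3}^{8} x t
  have hB : (0 ≤ ∑ t ∈ Icc 3 8, x t) ∧ (∑ t ∈ Icc 3 8, x t ≤ ∑ t ∈ Icc 3 8, y t) := by
    constructor
    · apply Finset.sum_nonneg
      intro t ht; simp only [mem_Icc] at ht
      exact (key t (by omega) (by omega)).1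
    · apply Finset.sum_le_sum
      intro t ht; simp only [mem_Icc] at ht
      exact (key t (by omega) (by omega)).2.1
  -- E
  have hE : (0 ≤ gsE r x) ∧ (gsE r x ≤ gsE r y) := by
    constructor
    · apply Finset.sum_nonneg
      intro t ht; simp only [mem_Icc] at ht
      apply Finset.sum_nonneg
      intro i hi; simp only [mem_Icc] at hi
      have hd : guoSunD t ≤ t - 1 := by unfold guoSunD; omega
      exact mul_nonneg (key i (by omega) (by omega)).1 (key t (by omega) (by omega)).1
    · apply Finset.sum_le_sum
      intro t ht; simp only [mem_Icc] at ht
      apply Finset.sum_le_sum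
      intro i hi; simp only [mem_Icc] at hi
      have hd : guoSunD t ≤ t - 1 := by unfold guoSunD; omega
      have hi' := key i (by omega) (by omega)
      have ht' := key t (by omega) (by omega)
      exact mul_le_mul hi'.2.1 ht'.2.1 ht'.1 hi'.2.2
  -- D2 = T − E
  have hD2 : (0 ≤ gsT r x - gsE r x) ∧ (gsT r x - gsE r x ≤ gsT r y - gsE r y) := by
    rw [gsTE_eq r hr x, gsTE_eq r hr y]
    constructor
    · apply Finset.sum_nonneg
      intro t ht; simp only [mem_Icc] at ht
      apply mul_nonneg (key t (by omega) (by omega)).1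
      apply Finset.sum_nonneg
      intro i hi
      simp only [mem_sdiff, mem_Icc] at hi
      exact (key i (by omega) (by omega)).1
    · apply Finset.sum_le_sum
      intro t ht; simp only [mem_Icc] at ht
      have ht' := key t (by omega) (by omega)
      have hin : (∑ i ∈ Icc 3 (t - 1) \ Icc 3 (guoSunD t), x i)
          ≤ ∑ i ∈ Icc 3 (t - 1) \ Icc 3 (guoSunD t), y i := by
        apply Finset.sum_le_sum
        intro i hi; simp only [mem_sdiff, mem_Icc] at hi
        exact (key i (by omega) (by omega)).2.1
      have hin0 : 0 ≤ ∑ i ∈ Icc 3 (t - 1) \ Icc 3 (guoSunD t), x i := by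
        apply Finset.sum_nonneg
        intro i hi; simp only [mem_sdiff, mem_Icc] at hi
        exact (key i (by omega) (by omega)).1
      exact mul_le_mul ht'.2.1 hin hin0 ht'.2.2
  -- D3 = T − x₃ C
  have hD3 : (0 ≤ gsT r x - x 3 * ∑ t ∈ Icc 9 r, x t) ∧
      (gsT r x - x 3 * ∑ t ∈ Icc 9 r, x t ≤ gsT r y - y 3 * ∑ t ∈ Icc 9 r, y t) := by
    rw [gsTC_eq r hr x, gsTC_eq r hr y]
    have inner : ∀ (a b : ℕ), 3 ≤ a → b ≤ r →
        (0 ≤ ∑ i ∈ Icc a b, x i) ∧ (∑ i ∈ Icc a b, x i ≤ ∑ i ∈ Icc a b, y i) := by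
      intro a b ha hb
      constructor
      · apply Finset.sum_nonneg
        intro i hi; simp only [mem_Icc] at hi
        exact (key i (by omega) (by omega)).1
      · apply Finset.sum_le_sum
        intro i hi; simp only [mem_Icc] at hi
        exact (key i (by omega) (by omega)).2.1
    constructor
    · apply add_nonneg
      · apply Finset.sum_nonneg
        intro t ht; simp only [mem_Icc] at ht
        exact mul_nonneg (key t (by omega) (by omega)).1
          (inner 3 (t - 1) (by omega) (by omega)).1
      · apply Finset.sum_nonneg
        intro t ht; simp only [mem_Icc] at ht
        exact mul_nonneg (key t (by omega) (by omega)).1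
          (inner 4 (t - 1) (by omega) (by omega)).1
    · apply add_le_add
      · apply Finset.sum_le_sum
        intro t ht; simp only [mem_Icc] at ht
        have ht' := key t (by omega) (by omega)
        exact mul_le_mul ht'.2.1 (inner 3 (t - 1) (by omega) (by omega)).2
          (inner 3 (t - 1) (by omega) (by omega)).1 ht'.2.2
      · apply Finset.sum_le_sum
        intro t ht; simp only [mem_Icc] at ht
        have ht' := key t (by omega) (by omega)
        exact mul_le_mul ht'.2.1 (inner 4 (t - 1) (by omega) (by omega)).2
          (inner 4 (t - 1) (by omega) (by omega)).1 ht'.2.2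
  obtain ⟨h10, h1m, h1y⟩ := key 1 (by omega) (by omega)
  obtain ⟨h20, h2m, h2y⟩ := key 2 (by omega) (by omega)
  obtain ⟨h30, h3m, h3y⟩ := key 3 (by omega) (by omega)
  obtain ⟨h40, h4m, h4y⟩ := key 4 (by omega) (by omega)
  have g1 : x 1 * x 2 ≤ y 1 * y 2 := mul_le_mul h1m h2m h20 h1y
  have g12y : 0 ≤ y 1 * y 2 := mul_nonneg h1y h2y
  have g12x : 0 ≤ x 1 * x 2 := mul_nonneg h10 h20
  have g2 : x 2 * x 3 ≤ y 2 * y 3 := mul_le_mul h2m h3m h30 h2y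
  have g3 : x 2 * x 4 ≤ y 2 * y 4 := mul_le_mul h2m h4m h40 h2y
  have g4 : x 1 * x 2 * (∑ t ∈ Icc 3 8, x t) ≤ y 1 * y 2 * (∑ t ∈ Icc 3 8, y t) :=
    mul_le_mul g1 hB.2 hB.1 g12y
  have g5 : (1 + x 1) * (gsP r x - 1 - gsS r x - gsT r x)
      ≤ (1 + y 1) * (gsP r y - 1 - gsS r y - gsT r y) :=
    mul_le_mul (by linarith) hRm hR0 (by linarith)
  have g7 : x 1 * (gsT r x - x 3 * ∑ t ∈ Icc 9 r, x t)
      ≤ y 1 * (gsT r y - y 3 * ∑ t ∈ Icc 9 r, y t) :=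
    mul_le_mul h1m hD3.2 hD3.1 h1y
  have g8 : x 2 * (gsP r x - 1 - gsS r x) ≤ y 2 * (gsP r y - 1 - gsS r y) :=
    mul_le_mul h2m hQm hQ0 h2y
  have g9 : x 1 * x 2 * gsE r x ≤ y 1 * y 2 * gsE r y :=
    mul_le_mul g1 hE.2 hE.1 g12y
  rw [gsF_eq r hr x, gsF_eq r hr y]
  linarith [hD2.2]
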